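/- Let α_1,...,α_l ≥ 0 with Σ_{i=1}^l α_i/(r_i−1)! ≤ 1, and let H be a {1, r_1, ..., r_l}-graph with 1 < r_1 < ... < r_l. If V(H^1) ≠ D(H[V(H^1)]), then L(H) = L(H[V(H^1) \ D(H[V(H^1)])]); and if V(H^1) = D(H[V(H^1)]), then L(H) = 1. -/

import Mathlib

open Finset

def simplexS (n : ℕ) : Set (Fin n → ℝ) :=
  {x | (∀ i, 0 ≤ x i) ∧ ∑ i, x i = 1}

/-- L(H,x) for a {1,r_1,...,r_l}-graph with 1-edges `E1`, higher edges `E`, and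
weight `α r` on edges of cardinality `r`. -/
def wLag1 {n : ℕ} (α : ℕ → ℝ) (E1 : Finset (Fin n)) (E : Finset (Finset (Fin n)))
    (x : Fin n → ℝ) : ℝ :=
  (∑ i ∈ E1, x i) + ∑ e ∈ E, α e.card * ∏ v ∈ e, x v

/-- The weighted Graph-Lagrangian L(H) (supremum over the standard simplex). -/
noncomputable def wLagMax {n : ℕ} (α : ℕ → ℝ) (E1 : Finset (Fin n))
    (E : Finset (Finset (Fin n))) : ℝ :=
  sSup (wLag1 α E1 E '' simplexS n)

/-- Isolated vertices of the subgraph of `(E1, E)` induced on `V(H^1) = E1`: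
vertices of `E1` lying in no induced edge of size ≥ 2. -/
def isolatedSet {n : ℕ} (E1 : Finset (Fin n)) (E : Finset (Finset (Fin n))) :
    Finset (Fin n) :=
  E1.filter (fun i => ∀ e ∈ E, e ⊆ E1 → i ∉ e)


lemma erase_sum_eq {ι : Type*} [DecidableEq ι] (s : Finset ι) (x : ι → ℝ)
    (m : ℕ) (v : ι) (hv : v ∈ s) :
    ∑ S ∈ (s.powersetCard (m+1)).filter (fun S => v ∈ S), ∏ w ∈ S.erase v, x w
      = ∑ T ∈ (s.erase v).powersetCard m, ∏ w ∈ T, x w := by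
  apply Finset.sum_nbij' (fun S => S.erase v) (fun T => insert v T)
  · intro S hS
    simp only [mem_filter, mem_powersetCard] at hS
    simp only [mem_powersetCard]
    exact ⟨fun w hw => mem_erase.2 ⟨(mem_erase.1 hw).1, hS.1.1 (mem_erase.1 hw).2⟩,
      by rw [card_erase_of_mem hS.2, hS.1.2]; rfl⟩
  · intro T hT
    simp only [mem_powersetCard] at hT
    simp only [mem_filter, mem_powersetCard]
    refine ⟨⟨?_, ?_⟩, mem_insert_self _ _⟩
    · intro w hw
      rcases mem_insert.1 hw with h | h
      · exact h ▸ hv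
      · exact (mem_erase.1 (hT.1 h)).2
    · rw [card_insert_of_notMem (fun h => (mem_erase.1 (hT.1 h)).1 rfl), hT.2]
  · intro S hS
    simp only [mem_filter] at hS
    exact insert_erase hS.2
  · intro T hT
    simp only [mem_powersetCard] at hT
    exact erase_insert (fun h => (mem_erase.1 (hT.1 h)).1 rfl)
  · intro S hS; rfl

lemma esymm_nonneg {ι : Type*} [DecidableEq ι] (s : Finset ι) (x : ι → ℝ)
    (hx : ∀ i, 0 ≤ x i) (m : ℕ) :
    0 ≤ ∑ S ∈ s.powersetCard m, ∏ v ∈ S, x v :=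
  Finset.sum_nonneg fun S _ => Finset.prod_nonneg fun v _ => hx v

lemma esymm_mono {ι : Type*} [DecidableEq ι] {s t : Finset ι} (hst : s ⊆ t) (x : ι → ℝ)
    (hx : ∀ i, 0 ≤ x i) (m : ℕ) :
    ∑ S ∈ s.powersetCard m, ∏ v ∈ S, x v ≤ ∑ S ∈ t.powersetCard m, ∏ v ∈ S, x v :=
  Finset.sum_le_sum_of_subset_of_nonneg (powersetCard_mono hst)
    (fun S _ _ => Finset.prod_nonneg fun v _ => hx v)

lemma esymm_step {ι : Type*} [DecidableEq ι] (s : Finset ι) (x : ι → ℝ)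
    (hx : ∀ i, 0 ≤ x i) (m : ℕ) :
    ((m+1 : ℕ) : ℝ) * ∑ S ∈ s.powersetCard (m+1), ∏ v ∈ S, x v ≤
      (∑ i ∈ s, x i) * ∑ S ∈ s.powersetCard m, ∏ v ∈ S, x v := by
  have key : ((m+1 : ℕ) : ℝ) * ∑ S ∈ s.powersetCard (m+1), ∏ v ∈ S, x v
      = ∑ v ∈ s, x v * ∑ S ∈ (s.powersetCard (m+1)).filter (fun S => v ∈ S),
          ∏ w ∈ S.erase v, x w := by
    rw [Finset.mul_sum]
    have h1 : ∀ S ∈ s.powersetCard (m+1),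
        ((m+1 : ℕ) : ℝ) * ∏ v ∈ S, x v = ∑ v ∈ S, x v * ∏ w ∈ S.erase v, x w := by
      intro S hS
      rw [mem_powersetCard] at hS
      have : ∀ v ∈ S, x v * ∏ w ∈ S.erase v, x w = ∏ w ∈ S, x w := by
        intro v hv; exact Finset.mul_prod_erase S x hv
      rw [Finset.sum_congr rfl this, Finset.sum_const, hS.2, nsmul_eq_mul]
    rw [Finset.sum_congr rfl h1]
    rw [Finset.sum_comm' (t' := s)
      (s' := fun v => (s.powersetCard (m+1)).filter (fun S => v ∈ S))
      (fun S v => by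
        simp only [mem_filter, mem_powersetCard]
        constructor
        · rintro ⟨⟨hSs, hc⟩, hv⟩; exact ⟨⟨⟨hSs, hc⟩, hv⟩, hSs hv⟩
        · rintro ⟨⟨h, hv⟩, _⟩; exact ⟨h, hv⟩)]
    exact Finset.sum_congr rfl fun v _ => (Finset.mul_sum _ _ _).symm
  rw [key, Finset.sum_mul]
  apply Finset.sum_le_sum
  intro v hv
  rw [erase_sum_eq s x m v hv]
  exact mul_le_mul_of_nonneg_left
    (esymm_mono (erase_subset v s) x hx m) (hx v)

lemma esymm_le_pow {ι : Type*} [DecidableEq ι] (s : Finset ι) (x : ι → ℝ)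
    (hx : ∀ i, 0 ≤ x i) (m : ℕ) :
    (m.factorial : ℝ) * ∑ S ∈ s.powersetCard m, ∏ v ∈ S, x v ≤ (∑ i ∈ s, x i)^m := by
  induction m with
  | zero => simp
  | succ m ih =>
    have h1 := esymm_step s x hx m
    have hfac : ((m+1).factorial : ℝ) = (m.factorial : ℝ) * ((m+1 : ℕ) : ℝ) := by
      rw [Nat.factorial_succ]; push_cast; ring
    rw [hfac, mul_assoc]
    calc (m.factorial : ℝ) * (((m+1:ℕ):ℝ) * ∑ S ∈ s.powersetCard (m+1), ∏ v ∈ S, x v)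
        ≤ (m.factorial : ℝ) * ((∑ i ∈ s, x i) * ∑ S ∈ s.powersetCard m, ∏ v ∈ S, x v) := by
          exact mul_le_mul_of_nonneg_left h1 (by positivity)
      _ = (∑ i ∈ s, x i) * ((m.factorial : ℝ) * ∑ S ∈ s.powersetCard m, ∏ v ∈ S, x v) := by ring
      _ ≤ (∑ i ∈ s, x i) * (∑ i ∈ s, x i)^m := by
          exact mul_le_mul_of_nonneg_left ih (Finset.sum_nonneg fun i _ => hx i)
      _ = (∑ i ∈ s, x i)^(m+1) := by ring

lemma degree_bound {n : ℕ} (rs : Finset ℕ) (α : ℕ → ℝ) (hα : ∀ r ∈ rs, 0 ≤ α r)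
    (hsum : ∑ r ∈ rs, α r / ((r - 1).factorial : ℝ) ≤ 1)
    (E : Finset (Finset (Fin n))) (hE : ∀ e ∈ E, e.card ∈ rs)
    (x : Fin n → ℝ) (hx0 : ∀ i, 0 ≤ x i) (hx1 : ∑ i, x i = 1) (j : Fin n) :
    ∑ e ∈ E.filter (fun e => j ∈ e), α e.card * ∏ v ∈ e, x v ≤ x j := by
  set F := E.filter (fun e => j ∈ e) with hF
  have h1 : ∀ e ∈ F, α e.card * ∏ v ∈ e, x v
      = x j * (α e.card * ∏ v ∈ e.erase j, x v) := by
    intro e he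
    rw [hF, mem_filter] at he
    rw [← Finset.mul_prod_erase e x he.2]; ring
  rw [Finset.sum_congr rfl h1, ← Finset.mul_sum]
  have key : ∑ e ∈ F, α e.card * ∏ v ∈ e.erase j, x v ≤ 1 := by
    rw [← Finset.sum_fiberwise_of_maps_to (g := fun e => e.card) (t := rs)
      (fun e he => hE e (mem_filter.1 he).1)]
    refine le_trans (Finset.sum_le_sum (fun r hr => ?_)) hsum
    have hcongr : ∀ e ∈ F.filter (fun e => e.card = r),
        α e.card * ∏ v ∈ e.erase j, x v = α r * ∏ v ∈ e.erase j, x v := by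
      intro e he; rw [(mem_filter.1 he).2]
    rw [Finset.sum_congr rfl hcongr, ← Finset.mul_sum]
    have hinj : ∑ e ∈ F.filter (fun e => e.card = r), ∏ v ∈ e.erase j, x v
        ≤ ∑ T ∈ (univ : Finset (Fin n)).powersetCard (r-1), ∏ v ∈ T, x v := by
      have hinj0 : ∀ e1 ∈ F.filter (fun e => e.card = r), ∀ e2 ∈ F.filter (fun e => e.card = r),
          e1.erase j = e2.erase j → e1 = e2 := by
        intro e1 h1' e2 h2' heq
        have hj1 : j ∈ e1 := (mem_filter.1 (mem_filter.1 h1').1).2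
        have hj2 : j ∈ e2 := (mem_filter.1 (mem_filter.1 h2').1).2
        rw [← insert_erase hj1, ← insert_erase hj2, heq]
      have himg := Finset.sum_image (f := fun T => ∏ v ∈ T, x v)
        (g := fun e : Finset (Fin n) => e.erase j) hinj0
      rw [← himg]
      apply Finset.sum_le_sum_of_subset_of_nonneg
      · intro T hT
        obtain ⟨e, he, rfl⟩ := Finset.mem_image.1 hT
        rw [mem_filter, hF, mem_filter] at he
        rw [mem_powersetCard]
        exact ⟨subset_univ _, by rw [card_erase_of_mem he.1.2, he.2]⟩
      · intro T _ _; exact Finset.prod_nonneg fun v _ => hx0 v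
    have hesymm := esymm_le_pow (univ : Finset (Fin n)) x hx0 (r-1)
    rw [hx1, one_pow] at hesymm
    have hfacpos : (0:ℝ) < ((r-1).factorial : ℝ) := by
      exact_mod_cast Nat.factorial_pos _
    have hE' : ∑ T ∈ (univ : Finset (Fin n)).powersetCard (r-1), ∏ v ∈ T, x v
        ≤ 1 / ((r-1).factorial : ℝ) := by
      rw [le_div_iff₀ hfacpos]; linarith
    calc α r * ∑ e ∈ F.filter (fun e => e.card = r), ∏ v ∈ e.erase j, x v
        ≤ α r * (1 / ((r-1).factorial : ℝ)) :=
          mul_le_mul_of_nonneg_left (le_trans hinj hE') (hα r hr)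
      _ = α r / ((r-1).factorial : ℝ) := by ring
  calc x j * ∑ e ∈ F, α e.card * ∏ v ∈ e.erase j, x v
      ≤ x j * 1 := mul_le_mul_of_nonneg_left key (hx0 j)
    _ = x j := mul_one _
lemma cover_bound {n : ℕ} (rs : Finset ℕ) (α : ℕ → ℝ) (hα : ∀ r ∈ rs, 0 ≤ α r)
    (hsum : ∑ r ∈ rs, α r / ((r - 1).factorial : ℝ) ≤ 1)
    (E1 : Finset (Fin n)) (E : Finset (Finset (Fin n))) (hE : ∀ e ∈ E, e.card ∈ rs)
    (x : Fin n → ℝ) (hx0 : ∀ i, 0 ≤ x i) (hx1 : ∑ i, x i = 1) :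
    ∑ e ∈ E.filter (fun e => ¬ e ⊆ E1), α e.card * ∏ v ∈ e, x v
      ≤ ∑ j ∈ (univ : Finset (Fin n)) \ E1, x j := by
  have hnn : ∀ e ∈ E, 0 ≤ α e.card * ∏ v ∈ e, x v := fun e he =>
    mul_nonneg (hα _ (hE e he)) (Finset.prod_nonneg fun v _ => hx0 v)
  calc ∑ e ∈ E.filter (fun e => ¬ e ⊆ E1), α e.card * ∏ v ∈ e, x v
      ≤ ∑ e ∈ E.filter (fun e => ¬ e ⊆ E1),
          ((e \ E1).card : ℝ) * (α e.card * ∏ v ∈ e, x v) := by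
        apply Finset.sum_le_sum
        intro e he
        rw [mem_filter] at he
        have hne : (e \ E1).Nonempty := Finset.sdiff_nonempty.2 he.2
        have h1 : (1:ℝ) ≤ ((e \ E1).card : ℝ) := by
          exact_mod_cast Finset.card_pos.2 hne
        exact le_mul_of_one_le_left (hnn e he.1) h1
    _ ≤ ∑ e ∈ E, ((e \ E1).card : ℝ) * (α e.card * ∏ v ∈ e, x v) := by
        apply Finset.sum_le_sum_of_subset_of_nonneg (filter_subset _ _)
        intro e he _
        exact mul_nonneg (by positivity) (hnn e he)
    _ = ∑ e ∈ E, ∑ j ∈ (univ : Finset (Fin n)) \ E1,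
          (if j ∈ e then α e.card * ∏ v ∈ e, x v else 0) := by
        apply Finset.sum_congr rfl
        intro e he
        rw [Finset.sum_ite_mem]
        have hset : ((univ : Finset (Fin n)) \ E1) ∩ e = e \ E1 := by
          ext j; simp [and_comm]
        rw [hset, Finset.sum_const, nsmul_eq_mul]
    _ = ∑ j ∈ (univ : Finset (Fin n)) \ E1, ∑ e ∈ E,
          (if j ∈ e then α e.card * ∏ v ∈ e, x v else 0) := Finset.sum_comm
    _ = ∑ j ∈ (univ : Finset (Fin n)) \ E1,
          ∑ e ∈ E.filter (fun e => j ∈ e), α e.card * ∏ v ∈ e, x v := by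
        apply Finset.sum_congr rfl
        intro j _
        rw [Finset.sum_filter]
    _ ≤ ∑ j ∈ (univ : Finset (Fin n)) \ E1, x j :=
        Finset.sum_le_sum fun j _ =>
          degree_bound rs α hα hsum E hE x hx0 hx1 j

lemma wLag1_le_one_add {n : ℕ} (rs : Finset ℕ) (α : ℕ → ℝ) (hα : ∀ r ∈ rs, 0 ≤ α r)
    (hsum : ∑ r ∈ rs, α r / ((r - 1).factorial : ℝ) ≤ 1)
    (E1 : Finset (Fin n)) (E : Finset (Finset (Fin n))) (hE : ∀ e ∈ E, e.card ∈ rs)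
    (x : Fin n → ℝ) (hx : x ∈ simplexS n) :
    wLag1 α E1 E x ≤ 1 + ∑ e ∈ E.filter (fun e => e ⊆ E1), α e.card * ∏ v ∈ e, x v := by
  obtain ⟨hx0, hx1⟩ := hx
  unfold wLag1
  rw [← Finset.sum_filter_add_sum_filter_not E (fun e => e ⊆ E1)]
  have hcov := cover_bound rs α hα hsum E1 E hE x hx0 hx1
  have hsplit : ∑ j ∈ (univ : Finset (Fin n)) \ E1, x j + ∑ i ∈ E1, x i = 1 := by
    rw [Finset.sum_sdiff (subset_univ E1), hx1]
  linarith

lemma wLag1_bdd {n : ℕ} (α : ℕ → ℝ) (E1 : Finset (Fin n)) (E : Finset (Finset (Fin n)))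
    (hα' : ∀ e ∈ E, 0 ≤ α e.card) (x : Fin n → ℝ) (hx : x ∈ simplexS n) :
    wLag1 α E1 E x ≤ (E1.card : ℝ) + ∑ e ∈ E, α e.card := by
  obtain ⟨hx0, hx1⟩ := hx
  have hxle : ∀ i, x i ≤ 1 := fun i =>
    hx1 ▸ Finset.single_le_sum (fun j _ => hx0 j) (mem_univ i)
  unfold wLag1
  apply add_le_add
  · calc ∑ i ∈ E1, x i ≤ ∑ _i ∈ E1, (1:ℝ) := Finset.sum_le_sum fun i _ => hxle i
      _ = (E1.card : ℝ) := by rw [Finset.sum_const, nsmul_eq_mul, mul_one]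
  · apply Finset.sum_le_sum
    intro e he
    calc α e.card * ∏ v ∈ e, x v ≤ α e.card * 1 :=
          mul_le_mul_of_nonneg_left
            (Finset.prod_le_one (fun v _ => hx0 v) (fun v _ => hxle v)) (hα' e he)
      _ = α e.card := mul_one _

lemma bddAbove_wLag {n : ℕ} (α : ℕ → ℝ) (E1 : Finset (Fin n)) (E : Finset (Finset (Fin n)))
    (hα' : ∀ e ∈ E, 0 ≤ α e.card) :
    BddAbove (wLag1 α E1 E '' simplexS n) := by
  refine ⟨(E1.card : ℝ) + ∑ e ∈ E, α e.card, ?_⟩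
  rintro y ⟨x, hx, rfl⟩
  exact wLag1_bdd α E1 E hα' x hx

lemma indicator_facts {n : ℕ} (α : ℕ → ℝ) (E1 : Finset (Fin n)) (E : Finset (Finset (Fin n)))
    (hE2 : ∀ e ∈ E, 1 < e.card) (i₀ : Fin n) (hi₀ : i₀ ∈ E1) :
    (fun i => if i = i₀ then (1:ℝ) else 0) ∈ simplexS n ∧
      wLag1 α E1 E (fun i => if i = i₀ then (1:ℝ) else 0) = 1 := by
  constructor
  · constructor
    · intro i; dsimp only; split <;> norm_num
    · rw [Finset.sum_ite_eq' univ i₀ (fun _ => (1:ℝ)), if_pos (mem_univ i₀)]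
  · unfold wLag1
    have h1 : ∑ i ∈ E1, (if i = i₀ then (1:ℝ) else 0) = 1 := by
      rw [Finset.sum_ite_eq' E1 i₀ (fun _ => (1:ℝ)), if_pos hi₀]
    have h2 : ∀ e ∈ E, α e.card * ∏ v ∈ e, (if v = i₀ then (1:ℝ) else 0) = 0 := by
      intro e he
      obtain ⟨v, hv, hvne⟩ := Finset.exists_mem_ne (hE2 e he) i₀
      have : ∏ w ∈ e, (if w = i₀ then (1:ℝ) else 0) = 0 :=
        Finset.prod_eq_zero hv (by rw [if_neg hvne])
      rw [this, mul_zero]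
    rw [h1, Finset.sum_congr rfl h2, Finset.sum_const, smul_zero, add_zero]

theorem lagrangian_reduces_to_level_one {n l : ℕ} (rs : Finset ℕ) (hl : rs.card = l)
    (hrs : ∀ r ∈ rs, 1 < r) (α : ℕ → ℝ) (hα : ∀ r ∈ rs, 0 ≤ α r)
    (hsum : ∑ r ∈ rs, α r / ((r - 1).factorial : ℝ) ≤ 1)
    (E1 : Finset (Fin n)) (hE1 : E1.Nonempty)
    (E : Finset (Finset (Fin n))) (hE : ∀ e ∈ E, e.card ∈ rs)
    (hlevels : ∀ r ∈ rs, ∃ e ∈ E, e.card = r) :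
    (E1 ≠ isolatedSet E1 E →
      wLagMax α E1 E
        = wLagMax α (E1 \ isolatedSet E1 E)
            (E.filter (fun e => e ⊆ E1 \ isolatedSet E1 E))) ∧
    (E1 = isolatedSet E1 E → wLagMax α E1 E = 1) := by
  have hα' : ∀ e ∈ E, 0 ≤ α e.card := fun e he => hα _ (hE e he)
  have hE2 : ∀ e ∈ E, 1 < e.card := fun e he => hrs _ (hE e he)
  have hbddH := bddAbove_wLag α E1 E hα'
  set D := isolatedSet E1 E with hD
  set W := E1 \ D with hW
  set E' := E.filter (fun e => e ⊆ W) with hE'def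
  have hE'sub : ∀ e ∈ E', e ∈ E := fun e he => (mem_filter.1 he).1
  have hα'' : ∀ e ∈ E', 0 ≤ α e.card := fun e he => hα' e (hE'sub e he)
  have hE2' : ∀ e ∈ E', 1 < e.card := fun e he => hE2 e (hE'sub e he)
  have hbddS := bddAbove_wLag α W E' hα''
  have hfilter_eq : E.filter (fun e => e ⊆ E1) = E' := by
    rw [hE'def]
    apply Finset.filter_congr
    intro e he
    constructor
    · intro hsub v hv
      rw [hW, mem_sdiff]
      refine ⟨hsub hv, fun hvD => ?_⟩
      exact (mem_filter.1 hvD).2 e he hsub hv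
    · intro hsub v hv
      exact (mem_sdiff.1 (hsub hv)).1
  constructor
  · -- Case 1 : E1 ≠ D
    intro hne
    have hDsub : D ⊆ E1 := filter_subset _ _
    have hWne : W.Nonempty := by
      rw [hW, Finset.sdiff_nonempty]
      intro hsub
      exact hne (Finset.Subset.antisymm hsub hDsub)
    obtain ⟨w₀, hw₀⟩ := hWne
    obtain ⟨hδmem, hδval⟩ := indicator_facts α W E' hE2' w₀ hw₀
    have hone_mem : (1:ℝ) ∈ wLag1 α W E' '' simplexS n := ⟨_, hδmem, hδval⟩
    have hSnn : (0:ℝ) ≤ wLagMax α W E' :=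
      le_trans zero_le_one (le_csSup hbddS hone_mem)
    apply le_antisymm
    · -- L(H) ≤ L(sub)
      apply Real.sSup_le _ hSnn
      rintro y ⟨x, hx, rfl⟩
      obtain ⟨hx0, hx1⟩ := hx
      set s₀ := ∑ v ∈ W, x v with hs₀def
      have hs₀0 : 0 ≤ s₀ := Finset.sum_nonneg fun v _ => hx0 v
      have hs₀1 : s₀ ≤ 1 := by
        rw [hs₀def, ← hx1]
        exact Finset.sum_le_sum_of_subset_of_nonneg (subset_univ W) fun i _ _ => hx0 i
      set y := fun i => (if i ∈ W then x i else 0) + (if i = w₀ then 1 - s₀ else 0)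
        with hydef
      have hy0 : ∀ i, 0 ≤ y i := by
        intro i
        apply add_nonneg
        · split
          · exact hx0 i
          · exact le_refl 0
        · split
          · linarith
          · exact le_refl 0
      have hymem : y ∈ simplexS n := by
        refine ⟨hy0, ?_⟩
        rw [hydef]
        rw [Finset.sum_add_distrib, Finset.sum_ite_mem, univ_inter,
          Finset.sum_ite_eq' univ w₀ (fun _ => 1 - s₀), if_pos (mem_univ w₀), ← hs₀def]
        ring
      have hxy : ∀ v ∈ W, x v ≤ y v := by
        intro v hv
        rw [hydef]
        dsimp only
        rw [if_pos hv]
        have : (0:ℝ) ≤ if v = w₀ then 1 - s₀ else 0 := by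
          split
          · linarith
          · exact le_refl 0
        linarith
      have hval : 1 + ∑ e ∈ E', α e.card * ∏ v ∈ e, x v ≤ wLag1 α W E' y := by
        unfold wLag1
        have hsumW : ∑ i ∈ W, y i = 1 := by
          rw [hydef]
          rw [Finset.sum_add_distrib]
          have h1 : ∑ i ∈ W, (if i ∈ W then x i else 0) = s₀ :=
            Finset.sum_congr rfl fun i hi => if_pos hi
          rw [h1, Finset.sum_ite_eq' W w₀ (fun _ => 1 - s₀), if_pos hw₀]
          ring
        rw [hsumW]
        apply add_le_add le_rfl
        apply Finset.sum_le_sum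
        intro e he
        apply mul_le_mul_of_nonneg_left _ (hα'' e he)
        apply Finset.prod_le_prod (fun v _ => hx0 v)
        intro v hv
        exact hxy v ((mem_filter.1 he).2 hv)
      have hmain := wLag1_le_one_add rs α hα hsum E1 E hE x ⟨hx0, hx1⟩
      rw [hfilter_eq] at hmain
      calc wLag1 α E1 E x ≤ 1 + ∑ e ∈ E', α e.card * ∏ v ∈ e, x v := hmain
        _ ≤ wLag1 α W E' y := hval
        _ ≤ wLagMax α W E' := le_csSup hbddS ⟨y, hymem, rfl⟩
    · -- L(sub) ≤ L(H)
      have hHnn : (0:ℝ) ≤ wLagMax α E1 E := by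
        obtain ⟨i₀, hi₀⟩ := hE1
        obtain ⟨hδm, hδv⟩ := indicator_facts α E1 E hE2 i₀ hi₀
        exact le_trans zero_le_one (le_csSup hbddH ⟨_, hδm, hδv⟩)
      apply Real.sSup_le _ hHnn
      rintro y ⟨x, hx, rfl⟩
      have hle : wLag1 α W E' x ≤ wLag1 α E1 E x := by
        unfold wLag1
        apply add_le_add
        · exact Finset.sum_le_sum_of_subset_of_nonneg (sdiff_subset)
            (fun i _ _ => hx.1 i)
        · exact Finset.sum_le_sum_of_subset_of_nonneg (filter_subset _ _)
            (fun e he _ => mul_nonneg (hα' e he)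
              (Finset.prod_nonneg fun v _ => hx.1 v))
      exact le_trans hle (le_csSup hbddH ⟨x, hx, rfl⟩)
  · -- Case 2 : E1 = D
    intro heq
    have hempty : E.filter (fun e => e ⊆ E1) = ∅ := by
      rw [Finset.filter_eq_empty_iff]
      intro e he hsub
      have hcard := hE2 e he
      obtain ⟨v, hv⟩ : e.Nonempty := Finset.card_pos.1 (by omega)
      have hvE1 : v ∈ E1 := hsub hv
      rw [heq, hD] at hvE1
      exact (mem_filter.1 hvE1).2 e he hsub hv
    apply le_antisymm
    · apply Real.sSup_le _ zero_le_one
      rintro y ⟨x, hx, rfl⟩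
      have := wLag1_le_one_add rs α hα hsum E1 E hE x hx
      rw [hempty, Finset.sum_empty, add_zero] at this
      exact this
    · obtain ⟨i₀, hi₀⟩ := hE1
      obtain ⟨hδm, hδv⟩ := indicator_facts α E1 E hE2 i₀ hi₀
      exact le_csSup hbddH ⟨_, hδm, hδv⟩
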